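/- Let (B, ν) be a probability space, H a real or complex Hilbert space, F : B → H a bounded strongly measurable function, y ∈ H, and ε > 0; set E = {b ∈ B : ‖F(b) − y‖ < ε}. Let S : B → B be a measurable bijection with measurable inverse, let U : H → H be a bounded linear operator, and let δ ≥ 0 be such that ‖U(F(b) − y)‖² ≤ ‖F(b) − y‖² + δ for every b ∈ B. Then ν(E ∩ {b : S⁻¹ b ∈ E}) · ‖U y − y‖² ≤ 3 ∫_B ‖U(F(S⁻¹ b)) − F(b)‖² dν(b) + 3 ε² · ν(E ∩ {b : S⁻¹ b ∈ E}) + 3 (ε² + δ) · ν(E ∩ {b : S⁻¹ b ∈ E}). -/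

import Mathlib

open MeasureTheory

/-- The three-term estimate (almost-isometric case): for a bounded strongly measurable
`F : B → H`, `E = {b | ‖F b - y‖ < ε}`, a measurable bijection `S` of `B` and a bounded
operator `U` on `H` satisfying `‖U(F b - y)‖² ≤ ‖F b - y‖² + δ` for all `b`,
`ν(E ∩ S⁻¹E) ‖Uy - y‖² ≤ 3 ∫ ‖U(F(S⁻¹b)) - F(b)‖² dν + 3 ε² ν(E ∩ S⁻¹E)
  + 3 (ε² + δ) ν(E ∩ S⁻¹E)`. -/
theorem stmt_3 {𝕜 : Type*} [RCLike 𝕜]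
    {B : Type*} [MeasurableSpace B] (ν : Measure B) [IsProbabilityMeasure ν]
    {H : Type*} [NormedAddCommGroup H] [InnerProductSpace 𝕜 H] [CompleteSpace H]
    (F : B → H) (hF : StronglyMeasurable F) (hFbdd : ∃ C : ℝ, ∀ b, ‖F b‖ ≤ C)
    (y : H) (ε : ℝ) (hε : 0 < ε)
    (S : B ≃ᵐ B) (U : H →L[𝕜] H) (δ : ℝ) (hδ : 0 ≤ δ)
    (hU : ∀ b, ‖U (F b - y)‖ ^ 2 ≤ ‖F b - y‖ ^ 2 + δ) :
    (ν ({b | ‖F b - y‖ < ε} ∩ {b | S.symm b ∈ {b | ‖F b - y‖ < ε}})).toReal * ‖U y - y‖ ^ 2 ≤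
      3 * ∫ b, ‖U (F (S.symm b)) - F b‖ ^ 2 ∂ν +
        3 * ε ^ 2 * (ν ({b | ‖F b - y‖ < ε} ∩ {b | S.symm b ∈ {b | ‖F b - y‖ < ε}})).toReal +
        3 * (ε ^ 2 + δ) *
          (ν ({b | ‖F b - y‖ < ε} ∩ {b | S.symm b ∈ {b | ‖F b - y‖ < ε}})).toReal := by
  obtain ⟨C, hC⟩ := hFbdd
  set E : Set B := {b | ‖F b - y‖ < ε} with hEdef
  set A : Set B := E ∩ {b | S.symm b ∈ E} with hAdef
  have hmeasE : MeasurableSet E := by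
    have hm : Measurable fun b => ‖F b - y‖ :=
      (hF.sub stronglyMeasurable_const).norm.measurable
    exact hm measurableSet_Iio
  have hmeasA : MeasurableSet A := hmeasE.inter (S.symm.measurable hmeasE)
  set g1 : B → ℝ := fun b => ‖U (F (S.symm b)) - F b‖ ^ 2 with hg1def
  have hFS : StronglyMeasurable fun b => F (S.symm b) :=
    hF.comp_measurable S.symm.measurable
  have hg1m : AEStronglyMeasurable g1 ν := by
    have : StronglyMeasurable g1 := by
      have : StronglyMeasurable fun b => U (F (S.symm b)) - F b :=
        (U.continuous.comp_stronglyMeasurable hFS).sub hF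
      exact (this.norm.measurable.pow_const 2).stronglyMeasurable
    exact this.aestronglyMeasurable
  have hg1bdd : ∀ b, ‖g1 b‖ ≤ (‖U‖ * |C| + |C|) ^ 2 := by
    intro b
    have h1 : ‖U (F (S.symm b)) - F b‖ ≤ ‖U‖ * |C| + |C| := by
      have := (U.le_opNorm (F (S.symm b)))
      have hb1 := (hC (S.symm b)).trans (le_abs_self C)
      have hb2 := (hC b).trans (le_abs_self C)
      have := norm_sub_le (U (F (S.symm b))) (F b)
      nlinarith [norm_nonneg (U (F (S.symm b))), norm_nonneg (F b), norm_nonneg (F (S.symm b)),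
        U.opNorm_nonneg]
    have h0 : (0:ℝ) ≤ ‖U (F (S.symm b)) - F b‖ := norm_nonneg _
    rw [Real.norm_eq_abs, abs_of_nonneg (by positivity : (0:ℝ) ≤ g1 b)]
    exact pow_le_pow_left₀ h0 h1 2
  have hg1i : Integrable g1 ν :=
    Integrable.mono' (integrable_const _) hg1m (ae_of_all _ hg1bdd)
  have hg1nn : 0 ≤ g1 := fun b => sq_nonneg _
  -- pointwise estimate on A
  have key : ∀ b ∈ A, ‖U y - y‖ ^ 2 ≤ 3 * g1 b + 3 * ε ^ 2 + 3 * (ε ^ 2 + δ) := by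
    intro b hb
    obtain ⟨hb1, hb2⟩ := hb
    have hb1' : ‖F b - y‖ < ε := hb1
    have hb2' : ‖F (S.symm b) - y‖ < ε := hb2
    have hUb := hU (S.symm b)
    have hdecomp : U y - y = -(U (F (S.symm b) - y)) + (U (F (S.symm b)) - F b) + (F b - y) := by
      rw [map_sub]; abel
    have h3 : ‖U y - y‖ ≤ ‖U (F (S.symm b) - y)‖ + ‖U (F (S.symm b)) - F b‖ + ‖F b - y‖ := by
      rw [hdecomp]
      calc ‖-(U (F (S.symm b) - y)) + (U (F (S.symm b)) - F b) + (F b - y)‖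
          ≤ ‖-(U (F (S.symm b) - y)) + (U (F (S.symm b)) - F b)‖ + ‖F b - y‖ := norm_add_le _ _
        _ ≤ ‖-(U (F (S.symm b) - y))‖ + ‖U (F (S.symm b)) - F b‖ + ‖F b - y‖ := by
            gcongr; exact norm_add_le _ _
        _ = ‖U (F (S.symm b) - y)‖ + ‖U (F (S.symm b)) - F b‖ + ‖F b - y‖ := by rw [norm_neg]
    have ha := norm_nonneg (U (F (S.symm b) - y))
    have hbn := norm_nonneg (U (F (S.symm b)) - F b)
    have hcn := norm_nonneg (F b - y)
    have hdn := norm_nonneg (U y - y)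
    have hg3 : ‖U (F (S.symm b) - y)‖ ^ 2 ≤ ε ^ 2 + δ := by
      nlinarith [norm_nonneg (F (S.symm b) - y)]
    simp only [hg1def]
    nlinarith [sq_nonneg (‖U (F (S.symm b) - y)‖ - ‖U (F (S.symm b)) - F b‖),
      sq_nonneg (‖U (F (S.symm b) - y)‖ - ‖F b - y‖),
      sq_nonneg (‖U (F (S.symm b)) - F b‖ - ‖F b - y‖)]
  have hconst : (ν A).toReal * ‖U y - y‖ ^ 2 = ∫ _ in A, ‖U y - y‖ ^ 2 ∂ν := by
    rw [setIntegral_const, smul_eq_mul]; rfl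
  have hintA : IntegrableOn (fun b => 3 * g1 b + 3 * ε ^ 2 + 3 * (ε ^ 2 + δ)) A ν := by
    exact (((hg1i.const_mul 3).add (integrable_const _)).add (integrable_const _)).integrableOn
  have step1 : ∫ _ in A, ‖U y - y‖ ^ 2 ∂ν
      ≤ ∫ b in A, (3 * g1 b + 3 * ε ^ 2 + 3 * (ε ^ 2 + δ)) ∂ν := by
    refine setIntegral_mono_on (integrableOn_const (measure_lt_top ν A).ne)
      hintA hmeasA key
  have step2 : ∫ b in A, (3 * g1 b + 3 * ε ^ 2 + 3 * (ε ^ 2 + δ)) ∂ν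
      = 3 * ∫ b in A, g1 b ∂ν + (3 * ε ^ 2 + 3 * (ε ^ 2 + δ)) * (ν A).toReal := by
    have h1 : ∀ b, 3 * g1 b + 3 * ε ^ 2 + 3 * (ε ^ 2 + δ)
        = 3 * g1 b + (3 * ε ^ 2 + 3 * (ε ^ 2 + δ)) := fun b => by ring
    simp_rw [h1]
    rw [integral_add ((hg1i.const_mul 3).integrableOn)
      (integrableOn_const (measure_lt_top ν A).ne),
      integral_const_mul, setIntegral_const, smul_eq_mul]
    unfold Measure.real
    ring
  have step3 : ∫ b in A, g1 b ∂ν ≤ ∫ b, g1 b ∂ν :=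
    setIntegral_le_integral hg1i (ae_of_all _ hg1nn)
  have hAnn : 0 ≤ (ν A).toReal := ENNReal.toReal_nonneg
  calc (ν A).toReal * ‖U y - y‖ ^ 2
      ≤ 3 * ∫ b in A, g1 b ∂ν + (3 * ε ^ 2 + 3 * (ε ^ 2 + δ)) * (ν A).toReal := by
        rw [hconst]; rw [← step2]; exact step1
    _ ≤ 3 * ∫ b, g1 b ∂ν + (3 * ε ^ 2 + 3 * (ε ^ 2 + δ)) * (ν A).toReal := by
        gcongr
    _ = 3 * ∫ b, ‖U (F (S.symm b)) - F b‖ ^ 2 ∂ν + 3 * ε ^ 2 * (ν A).toReal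
        + 3 * (ε ^ 2 + δ) * (ν A).toReal := by ring
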